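/- Let b ≥ 2 and k, L > 0 be real numbers, and set λ₁ := (1/2)(1 + 1/b)cosh(kL) − ( ((1/2)(1 + 1/b)cosh(kL))² − 1/b )^{1/2}. Then b·λ₁² < 1, and consequently the series ∑_{n=0}^∞ bⁿ·λ₁^{2n} converges. -/

import Mathlib

/-- Square-integrability of the regular-tree eigenfunction (Section 4.1): for the
smaller transfer-matrix eigenvalue
`λ₁ = (1/2)(1+1/b)cosh kL − √(((1/2)(1+1/b)cosh kL)² − 1/b)` one has `b·λ₁² < 1`,
and consequently `∑ bⁿ λ₁^{2n}` converges. -/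
theorem regular_tree_L2 (b k L : ℝ) (hb : 2 ≤ b) (hk : 0 < k) (hL : 0 < L)
    (lam₁ : ℝ)
    (hlam₁ : lam₁ = (1 / 2) * (1 + 1 / b) * Real.cosh (k * L) -
      Real.sqrt (((1 / 2) * (1 + 1 / b) * Real.cosh (k * L)) ^ 2 - 1 / b)) :
    b * lam₁ ^ 2 < 1 ∧ Summable (fun n : ℕ => b ^ n * lam₁ ^ (2 * n)) := by
  have hb0 : (0:ℝ) < b := by linarith
  set c : ℝ := (1 / 2) * (1 + 1 / b) * Real.cosh (k * L) with hc
  have hC : 1 < Real.cosh (k * L) := by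
    have : k * L ≠ 0 := by positivity
    simpa using Real.one_lt_cosh.mpr this
  have hu0 : 0 < 1 / b := by positivity
  have hu1 : 1 / b ≤ 1 / 2 := by
    rw [div_le_div_iff₀ hb0 (by norm_num)]; linarith
  have h1 : 1 / b < c ^ 2 := by
    have h2 : (1:ℝ) < Real.cosh (k * L) ^ 2 := by nlinarith
    have : 1 / b ≤ ((1 + 1 / b) / 2) ^ 2 := by nlinarith [sq_nonneg (1 - 1 / b)]
    calc 1 / b ≤ ((1 + 1 / b) / 2) ^ 2 := this
      _ < c ^ 2 := by rw [hc]; nlinarith [sq_nonneg ((1 + 1/b)/2)]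
  set s : ℝ := Real.sqrt (c ^ 2 - 1 / b) with hs
  have hs2 : s ^ 2 = c ^ 2 - 1 / b := Real.sq_sqrt (by linarith)
  have hs_pos : 0 < s := Real.sqrt_pos.mpr (by linarith)
  have hc_pos : 0 < c := by nlinarith
  have hs_lt : s < c := by nlinarith
  have hmain : b * lam₁ ^ 2 < 1 := by
    rw [hlam₁]
    have key : b * (c ^ 2 - s ^ 2) = 1 := by
      rw [hs2]; field_simp; ring
    nlinarith [mul_pos hb0 (mul_pos hs_pos (sub_pos.2 hs_lt))]
  refine ⟨hmain, ?_⟩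
  have heq : (fun n : ℕ => b ^ n * lam₁ ^ (2 * n)) = fun n : ℕ => (b * lam₁ ^ 2) ^ n := by
    funext n
    rw [mul_pow, pow_mul]
  rw [heq]
  exact summable_geometric_of_lt_one (by positivity) hmain
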